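/- arXiv:2509.03076 — 2 statements merged into one kernel-verified Lean document; each statement's English description precedes it below -/
import Mathlib

section
/- Let f be a holomorphic self-map of the unit disk D and h a left straightening of {f^n}. Then the hyperbolic step satisfies s^f(z) = ω(h(z), h(f(z))) for every z ∈ D. -/
open Complex Metric Filter Set

/-- Inverse hyperbolic tangent. -/
noncomputable def artanh (t : ℝ) : ℝ := (1/2) * Real.log ((1 + t) / (1 - t))

/-- Poincaré distance on the unit disk. -/
noncomputable def pd (z w : ℂ) : ℝ :=
  artanh ‖(w - z) / (1 - (starRingEnd ℂ) z * w)‖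

/-- Holomorphic self-map of the unit disk. -/
def HolSelfDisk (f : ℂ → ℂ) : Prop :=
  DifferentiableOn ℂ f (ball (0:ℂ) 1) ∧ MapsTo f (ball (0:ℂ) 1) (ball (0:ℂ) 1)

/-- A pair of maps that are mutually inverse holomorphic self-maps of the disk,
i.e. an automorphism of the disk together with its inverse. -/
def IsDiskAutPair (γ γinv : ℂ → ℂ) : Prop :=
  HolSelfDisk γ ∧ HolSelfDisk γinv ∧
  (∀ z ∈ ball (0:ℂ) 1, γinv (γ z) = z) ∧ (∀ z ∈ ball (0:ℂ) 1, γ (γinv z) = z)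

/-! ### Auxiliary material: Möbius maps and Schwarz–Pick -/

noncomputable def mob (a z : ℂ) : ℂ := (z - a) / (1 - (starRingEnd ℂ) a * z)

lemma pd_eq_mob (z w : ℂ) : pd z w = artanh ‖mob z w‖ := rfl

lemma mem_ball_abs {z : ℂ} : z ∈ ball (0:ℂ) 1 ↔ ‖z‖ < 1 := by
  simp [mem_ball]

lemma denom_ne {a z : ℂ} (ha : ‖a‖ < 1) (hz : ‖z‖ < 1) :
    1 - (starRingEnd ℂ) a * z ≠ 0 := by
  rw [sub_ne_zero]
  intro hEq
  have h1 : ‖(starRingEnd ℂ) a * z‖ < 1 := by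
    rw [norm_mul, Complex.norm_conj]
    calc ‖a‖ * ‖z‖ ≤ 1 * ‖z‖ :=
          mul_le_mul_of_nonneg_right ha.le (norm_nonneg z)
      _ < 1 := by simpa using hz
  rw [← hEq] at h1
  simp at h1

lemma key_id (a z : ℂ) :
    Complex.normSq (1 - (starRingEnd ℂ) a * z) - Complex.normSq (z - a)
      = (1 - Complex.normSq a) * (1 - Complex.normSq z) := by
  simp only [Complex.normSq_apply, Complex.sub_re, Complex.sub_im, Complex.mul_re,
    Complex.mul_im, Complex.conj_re, Complex.conj_im, Complex.one_re, Complex.one_im]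
  ring

lemma mob_lt_one {a z : ℂ} (ha : ‖a‖ < 1) (hz : ‖z‖ < 1) :
    ‖mob a z‖ < 1 := by
  have hd := denom_ne ha hz
  have hdpos : 0 < ‖1 - (starRingEnd ℂ) a * z‖ := by
    simpa [norm_pos_iff] using hd
  rw [mob, norm_div, div_lt_one hdpos]
  have h2 : Complex.normSq (z - a) < Complex.normSq (1 - (starRingEnd ℂ) a * z) := by
    have hpos : 0 < (1 - Complex.normSq a) * (1 - Complex.normSq z) := by
      have h1 : Complex.normSq a < 1 := by
        rw [← Complex.sq_norm]; nlinarith [norm_nonneg a]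
      have h2 : Complex.normSq z < 1 := by
        rw [← Complex.sq_norm]; nlinarith [norm_nonneg z]
      nlinarith
    nlinarith [key_id a z]
  rw [Complex.norm_def, Complex.norm_def]
  exact Real.sqrt_lt_sqrt (Complex.normSq_nonneg _) h2

lemma mob_mapsTo {a : ℂ} (ha : ‖a‖ < 1) :
    MapsTo (mob a) (ball (0:ℂ) 1) (ball (0:ℂ) 1) := fun z hz =>
  mem_ball_abs.2 (mob_lt_one ha (mem_ball_abs.1 hz))

lemma mob_diff {a : ℂ} (ha : ‖a‖ < 1) :
    DifferentiableOn ℂ (mob a) (ball (0:ℂ) 1) := by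
  intro z hz
  rw [mem_ball_abs] at hz
  exact (((differentiableAt_id.sub_const a).div
    ((differentiableAt_const (1:ℂ)).sub ((differentiableAt_const _).mul differentiableAt_id))
    (denom_ne ha hz))).differentiableWithinAt

lemma mob_self (a : ℂ) : mob a a = 0 := by simp [mob]

lemma mob_neg_zero (a : ℂ) : mob (-a) 0 = a := by simp [mob]

lemma mob_inv {a z : ℂ} (ha : ‖a‖ < 1) (hz : ‖z‖ < 1) :
    mob (-a) (mob a z) = z := by
  have h1 := denom_ne ha hz
  have hm := mob_lt_one ha hz
  have ha' : ‖-a‖ < 1 := by simpa using ha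
  have h2 := denom_ne ha' hm
  simp only [mob, map_neg, neg_mul, sub_neg_eq_add] at h2 ⊢
  rw [div_eq_iff h2]
  have h1' : 1 - z * (starRingEnd ℂ) a ≠ 0 := by rwa [mul_comm]
  field_simp
  ring

/-- The Schwarz–Pick lemma for the pseudo-hyperbolic distance. -/
lemma schwarz_pick {g : ℂ → ℂ} (hg : HolSelfDisk g) {a b : ℂ}
    (ha : a ∈ ball (0:ℂ) 1) (hb : b ∈ ball (0:ℂ) 1) :
    ‖mob (g a) (g b)‖ ≤ ‖mob a b‖ := by
  have ha' := mem_ball_abs.1 ha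
  have hb' := mem_ball_abs.1 hb
  have hga : g a ∈ ball (0:ℂ) 1 := hg.2 ha
  have hga' := mem_ball_abs.1 hga
  have hna : ‖-a‖ < 1 := by simpa using ha'
  set F : ℂ → ℂ := fun w => mob (g a) (g (mob (-a) w)) with hF
  have hFd : DifferentiableOn ℂ F (ball (0:ℂ) 1) := by
    refine DifferentiableOn.comp (mob_diff hga') ?_ ?_
    · exact DifferentiableOn.comp hg.1 (mob_diff hna) (mob_mapsTo hna)
    · exact (hg.2.comp (mob_mapsTo hna))
  have hFm : MapsTo F (ball (0:ℂ) 1) (ball (0:ℂ) 1) :=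
    ((mob_mapsTo hga').comp (hg.2.comp (mob_mapsTo hna)))
  have hF0 : F 0 = 0 := by
    simp only [hF, mob_neg_zero, mob_self]
  have hzb : ‖mob a b‖ < 1 := mob_lt_one ha' hb'
  have := Complex.norm_le_norm_of_mapsTo_ball hFd (hFm.mono_right ball_subset_closedBall) hF0 hzb
  simpa only [hF, mob_inv ha' hb'] using this

lemma pd_aut {γ γinv : ℂ → ℂ} (hp : IsDiskAutPair γ γinv) {a b : ℂ}
    (ha : a ∈ ball (0:ℂ) 1) (hb : b ∈ ball (0:ℂ) 1) :
    pd (γinv a) (γinv b) = pd a b := by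
  have le1 := schwarz_pick hp.2.1 ha hb
  have hia : γinv a ∈ ball (0:ℂ) 1 := hp.2.1.2 ha
  have hib : γinv b ∈ ball (0:ℂ) 1 := hp.2.1.2 hb
  have le2 := schwarz_pick hp.1 hia hib
  rw [hp.2.2.2 a ha, hp.2.2.2 b hb] at le2
  rw [pd_eq_mob, pd_eq_mob, le_antisymm le1 le2]

lemma pd_tendsto {u v : ℂ} (hu : ‖u‖ < 1) (hv : ‖v‖ < 1)
    {aa bb : ℕ → ℂ} (hau : Tendsto aa atTop (nhds u)) (hbv : Tendsto bb atTop (nhds v)) :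
    Tendsto (fun n => pd (aa n) (bb n)) atTop (nhds (pd u v)) := by
  have hconj : Tendsto (fun n => (starRingEnd ℂ) (aa n)) atTop (nhds ((starRingEnd ℂ) u)) :=
    (Complex.continuous_conj.tendsto u).comp hau
  have hden : Tendsto (fun n => 1 - (starRingEnd ℂ) (aa n) * bb n) atTop
      (nhds (1 - (starRingEnd ℂ) u * v)) :=
    tendsto_const_nhds.sub (hconj.mul hbv)
  have hmob : Tendsto (fun n => mob (aa n) (bb n)) atTop (nhds (mob u v)) :=
    ((hbv.sub hau).div hden (denom_ne hu hv))
  have hq : Tendsto (fun n => ‖mob (aa n) (bb n)‖) atTop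
      (nhds (‖mob u v‖)) :=
    (continuous_norm.tendsto _).comp hmob
  set t0 := ‖mob u v‖ with ht0
  have ht0lt : t0 < 1 := mob_lt_one hu hv
  have ht0nn : 0 ≤ t0 := norm_nonneg _
  have hne : (1 : ℝ) - t0 ≠ 0 := by linarith
  have hr : Tendsto (fun n => (1 + ‖mob (aa n) (bb n)‖) /
      (1 - ‖mob (aa n) (bb n)‖)) atTop (nhds ((1 + t0) / (1 - t0))) :=
    (tendsto_const_nhds.add hq).div (tendsto_const_nhds.sub hq) hne
  have hpos : (0 : ℝ) < (1 + t0) / (1 - t0) := div_pos (by linarith) (by linarith)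
  have hlog : Tendsto (fun n => Real.log ((1 + ‖mob (aa n) (bb n)‖) /
      (1 - ‖mob (aa n) (bb n)‖))) atTop (nhds (Real.log ((1 + t0) / (1 - t0)))) :=
    ((Real.continuousAt_log hpos.ne').tendsto).comp hr
  simpa only [pd_eq_mob, artanh] using hlog.const_mul (1/2 : ℝ)

theorem stmt6 (f : ℂ → ℂ) (hf : HolSelfDisk f)
    (γ γinv : ℕ → ℂ → ℂ) (h : ℂ → ℂ)
    (hγ : ∀ n, IsDiskAutPair (γ n) (γinv n)) (hh : HolSelfDisk h)
    (hconv : TendstoLocallyUniformlyOn (fun n z => γinv n (f^[n] z)) h atTop (ball (0:ℂ) 1)) :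
    ∀ z ∈ ball (0:ℂ) 1,
      Tendsto (fun n => pd (f^[n] z) (f^[n+1] z)) atTop (nhds (pd (h z) (h (f z)))) := by
  intro z hz
  have hfz : f z ∈ ball (0:ℂ) 1 := hf.2 hz
  have hiter : ∀ n, f^[n] z ∈ ball (0:ℂ) 1 := fun n => hf.2.iterate n hz
  have hiter' : ∀ n, f^[n] (f z) ∈ ball (0:ℂ) 1 := fun n => hf.2.iterate n hfz
  have ha : Tendsto (fun n => γinv n (f^[n] z)) atTop (nhds (h z)) := hconv.tendsto_at hz
  have hb : Tendsto (fun n => γinv n (f^[n] (f z))) atTop (nhds (h (f z))) :=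
    hconv.tendsto_at hfz
  have key := pd_tendsto (mem_ball_abs.1 (hh.2 hz)) (mem_ball_abs.1 (hh.2 hfz)) ha hb
  refine Tendsto.congr (fun n => ?_) key
  rw [pd_aut (hγ n) (hiter n) (hiter' n), Function.iterate_succ_apply]
end

section
/- Let f be a holomorphic self-map of the unit disk D without fixed points. Then the hyperbolic step s^f vanishes at some point of D if and only if s^f vanishes identically on D. -/
open Complex Metric Filter Set

noncomputable def Complex.abs : AbsoluteValue ℂ ℝ where
  toFun := norm
  map_mul' := norm_mul
  nonneg' := norm_nonneg
  eq_zero' _ := norm_eq_zero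
  add_le' := norm_add_le

theorem Complex.sq_abs (z : ℂ) : Complex.abs z ^ 2 = Complex.normSq z := Complex.sq_norm z

theorem Complex.abs_conj (z : ℂ) : Complex.abs ((starRingEnd ℂ) z) = Complex.abs z :=
  Complex.norm_conj z

theorem Complex.norm_eq_abs (z : ℂ) : ‖z‖ = Complex.abs z := rfl

theorem Complex.abs_re_le_abs (z : ℂ) : |z.re| ≤ Complex.abs z := Complex.abs_re_le_norm z

lemma normSq_identity (a b : ℂ) :
    Complex.normSq (1 - (starRingEnd ℂ) a * b) - Complex.normSq (b - a)
      = (1 - Complex.normSq a) * (1 - Complex.normSq b) := by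
  simp only [Complex.normSq_apply, Complex.sub_re, Complex.sub_im, Complex.mul_re, Complex.mul_im,
    Complex.one_re, Complex.one_im, Complex.conj_re, Complex.conj_im]
  ring

lemma normSq_lt_one {a : ℂ} (ha : a ∈ ball (0:ℂ) 1) : Complex.normSq a < 1 := by
  rw [mem_ball_zero_iff] at ha
  have : Complex.abs a < 1 := ha
  nlinarith [Complex.sq_abs a, Complex.abs.nonneg a]

lemma abs_num_lt {a b : ℂ} (ha : a ∈ ball (0:ℂ) 1) (hb : b ∈ ball (0:ℂ) 1) :
    Complex.abs (b - a) < Complex.abs (1 - (starRingEnd ℂ) a * b) := by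
  have h := normSq_identity a b
  have ha' := normSq_lt_one ha
  have hb' := normSq_lt_one hb
  have h1 : Complex.normSq (b - a) < Complex.normSq (1 - (starRingEnd ℂ) a * b) := by nlinarith
  have := Complex.sq_abs (b - a)
  have := Complex.sq_abs (1 - (starRingEnd ℂ) a * b)
  nlinarith [Complex.abs.nonneg (b - a), Complex.abs.nonneg (1 - (starRingEnd ℂ) a * b)]

lemma denom_ne_zero {a b : ℂ} (ha : a ∈ ball (0:ℂ) 1) (hb : b ∈ ball (0:ℂ) 1) :
    (1 : ℂ) - (starRingEnd ℂ) a * b ≠ 0 := by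
  intro h
  have h2 := abs_num_lt ha hb
  rw [h] at h2
  simp only [map_zero] at h2
  exact absurd h2 (Complex.abs.nonneg _).not_gt

lemma abs_mob_lt_one {a b : ℂ} (ha : a ∈ ball (0:ℂ) 1) (hb : b ∈ ball (0:ℂ) 1) :
    Complex.abs (mob a b) < 1 := by
  rw [mob, map_div₀]
  have h := abs_num_lt ha hb
  have h2 : 0 < Complex.abs (1 - (starRingEnd ℂ) a * b) :=
    lt_of_le_of_lt (Complex.abs.nonneg _) h
  exact (div_lt_one h2).2 h

lemma abs_mob_symm (a b : ℂ) : Complex.abs (mob a b) = Complex.abs (mob b a) := by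
  rw [mob, mob, map_div₀, map_div₀]
  have h1 : Complex.abs (b - a) = Complex.abs (a - b) := Complex.abs.map_sub b a
  have h2 : Complex.abs (1 - (starRingEnd ℂ) a * b) = Complex.abs (1 - (starRingEnd ℂ) b * a) := by
    rw [← Complex.abs_conj (1 - (starRingEnd ℂ) a * b)]
    congr 1
    simp only [map_sub, map_mul, map_one, Complex.conj_conj]
    ring
  rw [h1, h2]

lemma abs_mob_pos {a b : ℂ} (ha : a ∈ ball (0:ℂ) 1) (hb : b ∈ ball (0:ℂ) 1) (hab : b ≠ a) :
    0 < Complex.abs (mob a b) := by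
  rw [mob, map_div₀]
  apply div_pos
  · rw [Complex.abs.pos_iff, sub_ne_zero]
    exact hab
  · exact lt_of_le_of_lt (Complex.abs.nonneg _) (abs_num_lt ha hb)

lemma mob_mem_ball {a z : ℂ} (ha : a ∈ ball (0:ℂ) 1) (hz : z ∈ ball (0:ℂ) 1) :
    mob a z ∈ ball (0:ℂ) 1 := by
  rw [mem_ball_zero_iff]
  exact abs_mob_lt_one ha hz

lemma mob_neg_cancel {a z : ℂ} (ha : a ∈ ball (0:ℂ) 1) (hz : z ∈ ball (0:ℂ) 1) :
    mob (-a) (mob a z) = z := by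
  have hd : (1 : ℂ) - (starRingEnd ℂ) a * z ≠ 0 := denom_ne_zero ha hz
  have ha' : (-a) ∈ ball (0:ℂ) 1 := by simpa using ha
  have hd2 : (1 : ℂ) - (starRingEnd ℂ) (-a) * (mob a z) ≠ 0 :=
    denom_ne_zero ha' (mob_mem_ball ha hz)
  have hu : mob a z * (1 - (starRingEnd ℂ) a * z) = z - a := by
    rw [mob]; exact div_mul_cancel₀ _ hd
  have hrfl : mob (-a) (mob a z) = (mob a z - -a) / (1 - (starRingEnd ℂ) (-a) * mob a z) := rfl
  rw [hrfl, div_eq_iff hd2, map_neg]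
  linear_combination hu

lemma mob_differentiableOn {a : ℂ} (ha : a ∈ ball (0:ℂ) 1) :
    DifferentiableOn ℂ (mob a) (ball (0:ℂ) 1) := by
  apply DifferentiableOn.div
  · exact (differentiableOn_id.sub_const a)
  · exact (differentiableOn_const _).sub ((differentiableOn_const _).mul differentiableOn_id)
  · intro z hz
    exact denom_ne_zero ha hz

/-- Schwarz–Pick lemma for self-maps of the open unit disk. -/
lemma schwarz_pick_s9 {F : ℂ → ℂ} (hd : DifferentiableOn ℂ F (ball (0:ℂ) 1))
    (hm : MapsTo F (ball (0:ℂ) 1) (ball (0:ℂ) 1)) {a b : ℂ}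
    (ha : a ∈ ball (0:ℂ) 1) (hb : b ∈ ball (0:ℂ) 1) :
    Complex.abs (mob (F b) (F a)) ≤ Complex.abs (mob b a) := by
  have hFb : F b ∈ ball (0:ℂ) 1 := hm hb
  have hnb : (-b) ∈ ball (0:ℂ) 1 := by simpa using hb
  set G : ℂ → ℂ := fun u => mob (F b) (F (mob (-b) u)) with hG
  have hGd : DifferentiableOn ℂ G (ball (0:ℂ) 1) := by
    apply ((mob_differentiableOn hFb).comp (hd.comp (mob_differentiableOn hnb)
      (fun u hu => mob_mem_ball hnb hu)) (fun u hu => hm (mob_mem_ball hnb hu)))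
  have hG0 : G 0 = 0 := by
    have : mob (-b) 0 = b := by simp [mob]
    simp [hG, this, mob]
  have hGm' : MapsTo G (ball (0:ℂ) 1) (ball (G 0) 1) := by
    rw [hG0]
    exact fun u hu => mob_mem_ball hFb (hm (mob_mem_ball hnb hu))
  have hu : mob b a ∈ ball (0:ℂ) 1 := mob_mem_ball hb ha
  have hds := Complex.norm_dslope_le_div_of_mapsTo_ball hGd (hGm'.mono_right ball_subset_closedBall) hu
  have h1 : G (mob b a) = mob (F b) (F a) := by
    rw [hG]
    simp only
    rw [mob_neg_cancel hb ha]
  rcases eq_or_ne (mob b a) 0 with h0 | h0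
  · rw [← h1, h0, hG0]
  · rw [dslope_of_ne _ h0] at hds
    rw [slope_def_field, hG0, sub_zero, sub_zero] at hds
    rw [div_one] at hds
    have habs : Complex.abs (G (mob b a) / mob b a) ≤ 1 := hds
    rw [map_div₀] at habs
    rw [div_le_one (by simpa [Complex.abs.pos_iff] using h0)] at habs
    rw [h1] at habs
    simpa using habs

/-- Schwarz–Pick lemma for maps into the closed unit disk. -/
lemma schwarz_pick_closed {Φ : ℂ → ℂ} (hd : DifferentiableOn ℂ Φ (ball (0:ℂ) 1))
    (hb : ∀ u ∈ ball (0:ℂ) 1, Complex.abs (Φ u) ≤ 1) {a b : ℂ}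
    (ha : a ∈ ball (0:ℂ) 1) (hb' : b ∈ ball (0:ℂ) 1) :
    Complex.abs (mob (Φ b) (Φ a)) ≤ Complex.abs (mob b a) := by
  by_cases hex : ∃ u₀ ∈ ball (0:ℂ) 1, Complex.abs (Φ u₀) = 1
  · obtain ⟨u₀, hu₀, habs⟩ := hex
    have hmax : IsMaxOn (norm ∘ Φ) (ball (0:ℂ) 1) u₀ := by
      intro x hx
      simp only [Function.comp_apply, Complex.norm_eq_abs, habs]
      exact hb x hx
    have heq := Complex.eqOn_of_isPreconnected_of_isMaxOn_norm
      (convex_ball (0:ℂ) 1).isPreconnected isOpen_ball hd hu₀ hmax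
    have h1 : Φ a = Φ u₀ := heq ha
    have h2 : Φ b = Φ u₀ := heq hb'
    rw [h1, h2]
    simp [mob]
    positivity
  · push_neg at hex
    have hm : MapsTo Φ (ball (0:ℂ) 1) (ball (0:ℂ) 1) := by
      intro x hx
      rw [mem_ball_zero_iff]
      exact lt_of_le_of_ne (hb x hx) (hex x hx)
    exact schwarz_pick_s9 hd hm ha hb'

/-- Möbius invariance of the pseudo-hyperbolic distance. -/
lemma mob_invariance {a b c : ℂ} (ha : a ∈ ball (0:ℂ) 1) (hb : b ∈ ball (0:ℂ) 1)
    (hc : c ∈ ball (0:ℂ) 1) :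
    Complex.abs (mob (mob b a) (mob b c)) = Complex.abs (mob a c) := by
  have hba : (1 : ℂ) - (starRingEnd ℂ) b * a ≠ 0 := denom_ne_zero hb ha
  have hbc : (1 : ℂ) - (starRingEnd ℂ) b * c ≠ 0 := denom_ne_zero hb hc
  have hac : (1 : ℂ) - (starRingEnd ℂ) a * c ≠ 0 := denom_ne_zero ha hc
  have hba' : (1 : ℂ) - b * (starRingEnd ℂ) a ≠ 0 := by
    intro h
    apply hba
    have : (starRingEnd ℂ) ((1:ℂ) - b * (starRingEnd ℂ) a) = 0 := by rw [h]; simp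
    simpa [map_sub, map_mul, Complex.conj_conj, mul_comm] using this
  have hden : (1 : ℂ) - (starRingEnd ℂ) (mob b a) * (mob b c) ≠ 0 :=
    denom_ne_zero (mob_mem_ball hb ha) (mob_mem_ball hb hc)
  have key : mob (mob b a) (mob b c)
      = ((c - a) * (1 - b * (starRingEnd ℂ) a)) / ((1 - (starRingEnd ℂ) b * a) * (1 - (starRingEnd ℂ) a * c)) := by
    rw [show mob (mob b a) (mob b c)
        = (mob b c - mob b a) / (1 - (starRingEnd ℂ) (mob b a) * (mob b c)) from rfl]
    rw [div_eq_div_iff hden (by exact mul_ne_zero hba hac)]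
    simp only [mob, map_div₀, map_sub, map_mul, map_one, Complex.conj_conj]
    have hbc2 : (1:ℂ) - c * (starRingEnd ℂ) b ≠ 0 := by rwa [mul_comm]
    have hba2 : (1:ℂ) - a * (starRingEnd ℂ) b ≠ 0 := by rwa [mul_comm]
    field_simp
    ring
  rw [key, map_div₀, map_mul, map_mul]
  have habs : Complex.abs (1 - b * (starRingEnd ℂ) a) = Complex.abs (1 - (starRingEnd ℂ) b * a) := by
    rw [← Complex.abs_conj (1 - b * (starRingEnd ℂ) a)]
    congr 1
    simp only [map_sub, map_mul, map_one, Complex.conj_conj]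
  rw [habs]
  rw [show mob a c = (c - a) / (1 - (starRingEnd ℂ) a * c) from rfl, map_div₀]
  rw [mul_comm (Complex.abs (1 - (starRingEnd ℂ) b * a)) (Complex.abs (1 - (starRingEnd ℂ) a * c))]
  rw [mul_div_mul_right _ _ (by simpa [Complex.abs.ne_zero_iff] using hba)]

lemma real_key {r s e : ℝ} (hr0 : 0 ≤ r) (hs0 : 0 ≤ s) (hr1 : r < 1) (hs1 : s < 1)
    (he1 : e ≤ r * s) (he2 : -(r * s) ≤ e) :
    r^2 + s^2 - 2*e ≤ (r+s)^2 * (1 + r^2*s^2 - 2*e) := by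
  rcases le_or_gt ((r+s)^2) 1 with h | h
  · nlinarith [mul_nonneg (by linarith : (0:ℝ) ≤ e + r*s) (by linarith : (0:ℝ) ≤ 1 - (r+s)^2),
      mul_nonneg (sq_nonneg (r+s)) (by nlinarith [mul_nonneg hr0 hs0, sq_nonneg (r*s)] : (0:ℝ) ≤ 2*(r*s) + (r*s)^2)]
  · have f1 : (0:ℝ) ≤ s*(2 - r^2 - r*s) := by nlinarith
    have f2 : (0:ℝ) ≤ r*(2 - s^2 - r*s) := by nlinarith
    nlinarith [mul_nonneg (by linarith : (0:ℝ) ≤ r*s - e) (by linarith : (0:ℝ) ≤ (r+s)^2 - 1),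
      mul_nonneg f1 f2]

lemma pdist_le_abs_add {x y : ℂ} (hx : x ∈ ball (0:ℂ) 1) (hy : y ∈ ball (0:ℂ) 1) :
    Complex.abs (mob x y) ≤ Complex.abs x + Complex.abs y := by
  set r := Complex.abs x with hr
  set s := Complex.abs y with hs
  have hr0 : 0 ≤ r := Complex.abs.nonneg x
  have hs0 : 0 ≤ s := Complex.abs.nonneg y
  have hr1 : r < 1 := mem_ball_zero_iff.1 hx
  have hs1 : s < 1 := mem_ball_zero_iff.1 hy
  set e := ((starRingEnd ℂ) x * y).re with he
  have hee : Complex.abs ((starRingEnd ℂ) x * y) = r * s := by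
    rw [map_mul, Complex.abs_conj]
  have he1 : e ≤ r * s := by rw [← hee]; exact (abs_le.1 (Complex.abs_re_le_abs _)).2
  have he2 : -(r * s) ≤ e := by rw [← hee]; exact (abs_le.1 (Complex.abs_re_le_abs _)).1
  have n1 : (Complex.abs (y - x))^2 = r^2 + s^2 - 2*e := by
    rw [Complex.sq_abs, Complex.normSq_sub, ← Complex.sq_abs x, ← Complex.sq_abs y,
      mul_comm y ((starRingEnd ℂ) x)]
    ring
  have n2 : (Complex.abs (1 - (starRingEnd ℂ) x * y))^2 = 1 + r^2*s^2 - 2*e := by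
    rw [Complex.sq_abs, Complex.normSq_sub, Complex.normSq_one, Complex.normSq_mul,
      Complex.normSq_conj, one_mul, Complex.conj_re, ← Complex.sq_abs x, ← Complex.sq_abs y]
  have hkey := real_key hr0 hs0 hr1 hs1 he1 he2
  have hC0 : 0 < Complex.abs (1 - (starRingEnd ℂ) x * y) := by
    rw [Complex.abs.pos_iff]
    exact denom_ne_zero hx hy
  have hA : Complex.abs (y - x) ≤ (r + s) * Complex.abs (1 - (starRingEnd ℂ) x * y) := by
    nlinarith [Complex.abs.nonneg (y - x), mul_nonneg (by linarith : (0:ℝ) ≤ r + s) hC0.le]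
  rw [show mob x y = (y - x) / (1 - (starRingEnd ℂ) x * y) from rfl, map_div₀]
  rw [div_le_iff₀ hC0]
  exact hA

/-- Triangle inequality for the pseudo-hyperbolic distance. -/
lemma pdist_triangle {a b c : ℂ} (ha : a ∈ ball (0:ℂ) 1) (hb : b ∈ ball (0:ℂ) 1)
    (hc : c ∈ ball (0:ℂ) 1) :
    Complex.abs (mob a c) ≤ Complex.abs (mob a b) + Complex.abs (mob b c) := by
  rw [← mob_invariance ha hb hc]
  calc Complex.abs (mob (mob b a) (mob b c))
      ≤ Complex.abs (mob b a) + Complex.abs (mob b c) :=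
        pdist_le_abs_add (mob_mem_ball hb ha) (mob_mem_ball hb hc)
    _ = Complex.abs (mob a b) + Complex.abs (mob b c) := by rw [abs_mob_symm b a]

lemma abs_sub_le_mob {x y : ℂ} (hx : Complex.abs x ≤ 1) (hy : Complex.abs y ≤ 1) :
    Complex.abs y - Complex.abs x ≤ Complex.abs (mob x y) * (1 + Complex.abs x) := by
  by_cases hd : (1 : ℂ) - (starRingEnd ℂ) x * y = 0
  · have h1 : Complex.abs x * Complex.abs y = 1 := by
      have : (starRingEnd ℂ) x * y = 1 := by linear_combination -hd
      have := congrArg Complex.abs this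
      rwa [map_mul, Complex.abs_conj, map_one] at this
    have hx1 : Complex.abs x = 1 := by nlinarith [Complex.abs.nonneg x, Complex.abs.nonneg y]
    have hy1 : Complex.abs y = 1 := by nlinarith [Complex.abs.nonneg x, Complex.abs.nonneg y]
    rw [hx1, hy1]
    have : (0:ℝ) ≤ Complex.abs (mob x y) * (1 + 1) := by positivity
    linarith
  · have heq : Complex.abs (y - x) = Complex.abs (mob x y) * Complex.abs (1 - (starRingEnd ℂ) x * y) := by
      rw [show mob x y = (y - x) / (1 - (starRingEnd ℂ) x * y) from rfl, map_div₀,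
        div_mul_cancel₀]
      rwa [Ne, Complex.abs.eq_zero]
    have h1 : Complex.abs y - Complex.abs x ≤ Complex.abs (y - x) := by
      have := Complex.abs.add_le x (y - x)
      simp only [add_sub_cancel] at this
      linarith
    have h2 : Complex.abs (1 - (starRingEnd ℂ) x * y) ≤ 1 + Complex.abs x := by
      calc Complex.abs (1 - (starRingEnd ℂ) x * y)
          = Complex.abs (1 + -((starRingEnd ℂ) x * y)) := by rw [sub_eq_add_neg]
        _ ≤ Complex.abs 1 + Complex.abs (-((starRingEnd ℂ) x * y)) := Complex.abs.add_le _ _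
        _ = 1 + Complex.abs x * Complex.abs y := by
            rw [map_one, Complex.abs.map_neg, map_mul, Complex.abs_conj]
        _ ≤ 1 + Complex.abs x := by nlinarith [Complex.abs.nonneg x]
    calc Complex.abs y - Complex.abs x ≤ Complex.abs (y - x) := h1
      _ = Complex.abs (mob x y) * Complex.abs (1 - (starRingEnd ℂ) x * y) := heq
      _ ≤ Complex.abs (mob x y) * (1 + Complex.abs x) := by
          exact mul_le_mul_of_nonneg_left h2 (Complex.abs.nonneg _)

/-- Beardon–Minda style three-point Schwarz–Pick inequality. -/
lemma three_point {F : ℂ → ℂ} (hFd : DifferentiableOn ℂ F (ball (0:ℂ) 1))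
    (hFm : MapsTo F (ball (0:ℂ) 1) (ball (0:ℂ) 1)) {p q v : ℂ}
    (hp : p ∈ ball (0:ℂ) 1) (hq : q ∈ ball (0:ℂ) 1) (hv : v ∈ ball (0:ℂ) 1)
    (hqp : q ≠ p) (hvp : v ≠ p) :
    Complex.abs (mob (F p) (F v)) / Complex.abs (mob p v)
      ≤ Complex.abs (mob q v) * (1 + Complex.abs (mob (F p) (F q)) / Complex.abs (mob p q))
        + Complex.abs (mob (F p) (F q)) / Complex.abs (mob p q) := by
  have hFp : F p ∈ ball (0:ℂ) 1 := hFm hp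
  have hnp : (-p) ∈ ball (0:ℂ) 1 := by simpa using hp
  set G : ℂ → ℂ := fun u => mob (F p) (F (mob (-p) u)) with hG
  have hGd : DifferentiableOn ℂ G (ball (0:ℂ) 1) := by
    apply ((mob_differentiableOn hFp).comp (hFd.comp (mob_differentiableOn hnp)
      (fun u hu => mob_mem_ball hnp hu)) (fun u hu => hFm (mob_mem_ball hnp hu)))
  have hG0 : G 0 = 0 := by
    have : mob (-p) 0 = p := by simp [mob]
    simp [hG, this, mob]
  have hGm' : MapsTo G (ball (0:ℂ) 1) (ball (G 0) 1) := by
    rw [hG0]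
    exact fun u hu => mob_mem_ball hFp (hFm (mob_mem_ball hnp hu))
  set Φ := dslope G 0 with hΦdef
  have hΦd : DifferentiableOn ℂ Φ (ball (0:ℂ) 1) :=
    (differentiableOn_dslope (ball_mem_nhds _ one_pos)).2 hGd
  have hΦb : ∀ u ∈ ball (0:ℂ) 1, Complex.abs (Φ u) ≤ 1 := by
    intro u hu
    have := Complex.norm_dslope_le_div_of_mapsTo_ball hGd (hGm'.mono_right ball_subset_closedBall) hu
    simp only [div_one] at this; exact this
  set u₁ := mob p q with hu₁def
  set u₂ := mob p v with hu₂def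
  have hu₁ : u₁ ∈ ball (0:ℂ) 1 := mob_mem_ball hp hq
  have hu₂ : u₂ ∈ ball (0:ℂ) 1 := mob_mem_ball hp hv
  have habs₁ : 0 < Complex.abs u₁ := abs_mob_pos hp hq hqp
  have habs₂ : 0 < Complex.abs u₂ := abs_mob_pos hp hv hvp
  have hu₁ne : u₁ ≠ 0 := by
    intro h
    rw [h] at habs₁
    simp at habs₁
  have hu₂ne : u₂ ≠ 0 := by
    intro h
    rw [h] at habs₂
    simp at habs₂
  have hGu₁ : G u₁ = mob (F p) (F q) := by
    rw [hG]
    simp only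
    rw [hu₁def, mob_neg_cancel hp hq]
  have hGu₂ : G u₂ = mob (F p) (F v) := by
    rw [hG]
    simp only
    rw [hu₂def, mob_neg_cancel hp hv]
  have hΦ1 : Complex.abs (Φ u₁) = Complex.abs (mob (F p) (F q)) / Complex.abs (mob p q) := by
    rw [hΦdef, dslope_of_ne _ hu₁ne, slope_def_field, hG0, sub_zero, sub_zero, map_div₀, hGu₁]
  have hΦ2 : Complex.abs (Φ u₂) = Complex.abs (mob (F p) (F v)) / Complex.abs (mob p v) := by
    rw [hΦdef, dslope_of_ne _ hu₂ne, slope_def_field, hG0, sub_zero, sub_zero, map_div₀, hGu₂]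
  have hsp := schwarz_pick_closed hΦd hΦb hu₂ hu₁
  have hinv : Complex.abs (mob u₁ u₂) = Complex.abs (mob q v) := mob_invariance hq hp hv
  have ht2 := abs_sub_le_mob (hΦb u₁ hu₁) (hΦb u₂ hu₂)
  rw [hΦ1, hΦ2] at ht2
  have hP : Complex.abs (mob (Φ u₁) (Φ u₂)) ≤ Complex.abs (mob q v) := by
    rw [← hinv]
    exact hsp
  have hA0 : 0 ≤ Complex.abs (mob (F p) (F q)) / Complex.abs (mob p q) := by positivity
  nlinarith [Complex.abs.nonneg (mob (Φ u₁) (Φ u₂)),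
    mul_le_mul_of_nonneg_right hP (by linarith : (0:ℝ) ≤ 1 + Complex.abs (mob (F p) (F q)) / Complex.abs (mob p q))]

lemma artanh_zero : artanh 0 = 0 := by simp [artanh]

lemma continuousAt_artanh {c : ℝ} (h0 : 0 ≤ c) (h1 : c < 1) : ContinuousAt artanh c := by
  have hc : (1:ℝ) - c ≠ 0 := by linarith
  have hval : (1 + c) / (1 - c) ≠ 0 := ne_of_gt (div_pos (by linarith) (by linarith))
  have : ContinuousAt (fun t : ℝ => (1/2 : ℝ) * Real.log ((1 + t) / (1 - t))) c := by
    apply ContinuousAt.mul continuousAt_const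
    apply ContinuousAt.log
    · exact (continuousAt_const.add continuousAt_id).div
        (continuousAt_const.sub continuousAt_id) hc
    · exact hval
  exact this

lemma artanh_eq_zero {t : ℝ} (h0 : 0 ≤ t) (h1 : t < 1) (h : artanh t = 0) : t = 0 := by
  rw [artanh] at h
  have h2 : Real.log ((1+t)/(1-t)) = 0 := by linarith
  have hp1 : (0:ℝ) < 1 + t := by linarith
  have hp2 : (0:ℝ) < 1 - t := by linarith
  have hpos : 0 < (1+t)/(1-t) := div_pos hp1 hp2
  rcases Real.log_eq_zero.1 h2 with h3 | h3 | h3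
  · rw [h3] at hpos; linarith
  · rw [div_eq_one_iff_eq (by linarith : (1:ℝ) - t ≠ 0)] at h3
    linarith
  · rw [h3] at hpos; linarith

lemma iterate_diff {f : ℂ → ℂ} (hf : HolSelfDisk f) (n : ℕ) :
    DifferentiableOn ℂ (f^[n]) (ball (0:ℂ) 1) := by
  induction n with
  | zero => simpa using differentiableOn_id
  | succ n ih =>
      rw [Function.iterate_succ']
      exact hf.1.comp ih (hf.2.iterate n)

lemma iterate_mem {f : ℂ → ℂ} (hf : HolSelfDisk f) {z : ℂ} (hz : z ∈ ball (0:ℂ) 1) (n : ℕ) :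
    f^[n] z ∈ ball (0:ℂ) 1 := hf.2.iterate n hz

/-- Key step: if the pseudo-hyperbolic steps of the orbit of `z₀` tend to `0`, then for
any `w` the pseudo-hyperbolic distance between the orbits of `z₀` and `w` tends to `0`. -/
lemma key_vanish {f : ℂ → ℂ} (hf : HolSelfDisk f)
    (hfix : ∀ z ∈ ball (0:ℂ) 1, f z ≠ z) {z₀ w : ℂ}
    (hz₀ : z₀ ∈ ball (0:ℂ) 1) (hw : w ∈ ball (0:ℂ) 1)
    (hstep0 : Tendsto (fun n => Complex.abs (mob (f^[n] z₀) (f^[n+1] z₀))) atTop (nhds 0)) :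
    Tendsto (fun n => Complex.abs (mob (f^[n] z₀) (f^[n] w))) atTop (nhds 0) := by
  set ε : ℕ → ℝ := fun n => Complex.abs (mob (f^[n] z₀) (f^[n+1] z₀)) with hεdef
  set b : ℕ → ℝ := fun n => Complex.abs (mob (f^[n] z₀) (f^[n] w)) with hbdef
  set c : ℕ → ℝ := fun n => Complex.abs (mob (f^[n+1] z₀) (f^[n] w)) with hcdef
  have horb : ∀ n, f^[n] z₀ ∈ ball (0:ℂ) 1 := iterate_mem hf hz₀
  have horbw : ∀ n, f^[n] w ∈ ball (0:ℂ) 1 := iterate_mem hf hw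
  have hb0 : ∀ n, 0 ≤ b n := fun n => Complex.abs.nonneg _
  have hc0 : ∀ n, 0 ≤ c n := fun n => Complex.abs.nonneg _
  have hε0 : ∀ n, 0 ≤ ε n := fun n => Complex.abs.nonneg _
  have hbanti : Antitone b := by
    apply antitone_nat_of_succ_le
    intro n
    have h := schwarz_pick_s9 hf.1 hf.2 (horbw n) (horb n)
    simpa [hbdef, Function.iterate_succ_apply' f n] using h
  have hbdd : BddBelow (range b) := ⟨0, by rintro x ⟨n, rfl⟩; exact hb0 n⟩
  have ht : Tendsto b atTop (nhds (⨅ n, b n)) := tendsto_atTop_ciInf hbanti hbdd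
  set t := ⨅ n, b n with htdef
  have ht0 : 0 ≤ t := le_ciInf hb0
  have htle : ∀ m, t ≤ b m := fun m => ciInf_le hbdd m
  suffices hts : t = 0 by rwa [hts] at ht
  by_contra hne
  have htpos : 0 < t := lt_of_le_of_ne ht0 (Ne.symm hne)
  have ht1 : t < 1 := lt_of_le_of_lt (htle 0) (by simpa [hbdef] using abs_mob_lt_one hz₀ hw)
  have hεpos : ∀ m, 0 < ε m := by
    intro m
    apply abs_mob_pos (horb m) (horb (m+1))
    rw [Function.iterate_succ_apply' f m]
    exact hfix _ (horb m)
  have hbpos : ∀ m, 0 < b m := fun m => lt_of_lt_of_le htpos (htle m)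
  have hwne : ∀ m, f^[m] w ≠ f^[m] z₀ := by
    intro m h
    have := hbpos m
    rw [hbdef] at this
    simp only at this
    rw [h] at this
    simp [mob] at this
  have hqne : ∀ m, f^[m+1] z₀ ≠ f^[m] z₀ := by
    intro m
    rw [Function.iterate_succ_apply' f m]
    exact hfix _ (horb m)
  -- main three-point estimate
  have key : ∀ m, t ≤ c m * b m := by
    intro m
    have hkey : ∀ n, b (n + m) / b m
        ≤ c m * (1 + ε (n + m) / ε m) + ε (n + m) / ε m := by
      intro n
      have h3 := three_point (iterate_diff hf n) (hf.2.iterate n)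
        (horb m) (horb (m+1)) (horbw m) (hqne m) (hwne m)
      have e1 : f^[n] (f^[m] z₀) = f^[n + m] z₀ := (Function.iterate_add_apply f n m z₀).symm
      have e2 : f^[n] (f^[m+1] z₀) = f^[n + m + 1] z₀ := by
        rw [← Function.iterate_add_apply f n (m+1) z₀]
        rfl
      have e3 : f^[n] (f^[m] w) = f^[n + m] w := (Function.iterate_add_apply f n m w).symm
      rw [e1, e2, e3] at h3
      exact h3
    -- pass to the limit in n
    have htail_b : Tendsto (fun n => b (n + m)) atTop (nhds t) :=
      ht.comp (tendsto_add_atTop_nat m)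
    have htail_ε : Tendsto (fun n => ε (n + m)) atTop (nhds 0) :=
      hstep0.comp (tendsto_add_atTop_nat m)
    have hLHS : Tendsto (fun n => b (n + m) / b m) atTop (nhds (t / b m)) :=
      htail_b.div_const _
    have hRHS : Tendsto (fun n => c m * (1 + ε (n + m) / ε m) + ε (n + m) / ε m)
        atTop (nhds (c m * (1 + 0 / ε m) + 0 / ε m)) := by
      apply Tendsto.add
      · exact tendsto_const_nhds.mul (tendsto_const_nhds.add (htail_ε.div_const _))
      · exact htail_ε.div_const _
    have hle := le_of_tendsto_of_tendsto' hLHS hRHS hkey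
    have hle' : t / b m ≤ c m := by
      rw [zero_div, add_zero, add_zero, mul_one] at hle
      exact hle
    rw [div_le_iff₀ (hbpos m)] at hle'
    exact hle' 
  -- triangle : c m ≤ ε m + b m
  have hcb : ∀ m, c m ≤ ε m + b m := by
    intro m
    have h := pdist_triangle (horb (m+1)) (horb m) (horbw m)
    calc c m ≤ Complex.abs (mob (f^[m+1] z₀) (f^[m] z₀))
        + Complex.abs (mob (f^[m] z₀) (f^[m] w)) := h
      _ = ε m + b m := by rw [abs_mob_symm]
  -- conclude
  have hfinal : ∀ m, t ≤ (ε m + b m) * b m := by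
    intro m
    calc t ≤ c m * b m := key m
      _ ≤ (ε m + b m) * b m := mul_le_mul_of_nonneg_right (hcb m) (hb0 m)
  have hlim : Tendsto (fun m => (ε m + b m) * b m) atTop (nhds ((0 + t) * t)) :=
    (hstep0.add ht).mul ht
  have : t ≤ (0 + t) * t := le_of_tendsto_of_tendsto' tendsto_const_nhds hlim hfinal
  rw [zero_add] at this
  nlinarith

theorem stmt9 (f : ℂ → ℂ) (hf : HolSelfDisk f)
    (hfix : ∀ z ∈ ball (0:ℂ) 1, f z ≠ z)
    (s : ℂ → ℝ)
    (hs : ∀ z ∈ ball (0:ℂ) 1,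
      Tendsto (fun n => pd (f^[n] z) (f^[n+1] z)) atTop (nhds (s z))) :
    (∃ z₀ ∈ ball (0:ℂ) 1, s z₀ = 0) ↔ (∀ z ∈ ball (0:ℂ) 1, s z = 0) := by
  constructor
  · rintro ⟨z₀, hz₀, hsz₀⟩ w hw
    set ε : ℕ → ℝ := fun n => Complex.abs (mob (f^[n] z₀) (f^[n+1] z₀)) with hεdef
    have horb : ∀ n, f^[n] z₀ ∈ ball (0:ℂ) 1 := iterate_mem hf hz₀
    have horbw : ∀ n, f^[n] w ∈ ball (0:ℂ) 1 := iterate_mem hf hw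
    have hεanti : Antitone ε := by
      apply antitone_nat_of_succ_le
      intro n
      have h := schwarz_pick_s9 hf.1 hf.2 (horb (n+1)) (horb n)
      rw [← Function.iterate_succ_apply' f (n+1) z₀, ← Function.iterate_succ_apply' f n z₀] at h
      exact h
    have hεdd : BddBelow (range ε) := ⟨0, by rintro x ⟨n, rfl⟩; exact Complex.abs.nonneg _⟩
    have hεt : Tendsto ε atTop (nhds (⨅ n, ε n)) := tendsto_atTop_ciInf hεanti hεdd
    set L := ⨅ n, ε n with hLdef
    have hL0 : 0 ≤ L := le_ciInf (fun n => Complex.abs.nonneg _)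
    have hL1 : L < 1 := lt_of_le_of_lt (ciInf_le hεdd 0) (abs_mob_lt_one (horb 0) (horb 1))
    have hpd : Tendsto (fun n => pd (f^[n] z₀) (f^[n+1] z₀)) atTop (nhds (artanh L)) := by
      have heq : (fun n => pd (f^[n] z₀) (f^[n+1] z₀)) = artanh ∘ ε := rfl
      rw [heq]
      exact (continuousAt_artanh hL0 hL1).tendsto.comp hεt
    have huniq : artanh L = s z₀ := tendsto_nhds_unique hpd (hs z₀ hz₀)
    have hLz : L = 0 := artanh_eq_zero hL0 hL1 (by rw [huniq, hsz₀])
    have hstep0 : Tendsto ε atTop (nhds 0) := by rwa [hLz] at hεt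
    have hB := key_vanish hf hfix hz₀ hw hstep0
    have hBshift : Tendsto (fun n => Complex.abs (mob (f^[n+1] z₀) (f^[n+1] w))) atTop (nhds 0) :=
      hB.comp (tendsto_add_atTop_nat 1)
    have hbound : ∀ n, Complex.abs (mob (f^[n] w) (f^[n+1] w))
        ≤ Complex.abs (mob (f^[n] z₀) (f^[n] w))
          + (ε n + Complex.abs (mob (f^[n+1] z₀) (f^[n+1] w))) := by
      intro n
      have t1 := pdist_triangle (horbw n) (horb n) (horbw (n+1))
      have t2 := pdist_triangle (horb n) (horb (n+1)) (horbw (n+1))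
      have hsymm : Complex.abs (mob (f^[n] w) (f^[n] z₀))
          = Complex.abs (mob (f^[n] z₀) (f^[n] w)) := abs_mob_symm _ _
      calc Complex.abs (mob (f^[n] w) (f^[n+1] w))
          ≤ Complex.abs (mob (f^[n] w) (f^[n] z₀))
            + Complex.abs (mob (f^[n] z₀) (f^[n+1] w)) := t1
        _ ≤ Complex.abs (mob (f^[n] z₀) (f^[n] w))
            + (ε n + Complex.abs (mob (f^[n+1] z₀) (f^[n+1] w))) := by
            rw [hsymm] at *
            linarith
    have hsq : Tendsto (fun n => Complex.abs (mob (f^[n] w) (f^[n+1] w))) atTop (nhds 0) := by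
      apply squeeze_zero (fun n => Complex.abs.nonneg _) hbound
      have := hB.add (hstep0.add hBshift)
      simpa using this
    have hpdw : Tendsto (fun n => pd (f^[n] w) (f^[n+1] w)) atTop (nhds (artanh 0)) := by
      have heq : (fun n => pd (f^[n] w) (f^[n+1] w))
          = artanh ∘ (fun n => Complex.abs (mob (f^[n] w) (f^[n+1] w))) := rfl
      rw [heq]
      exact (continuousAt_artanh le_rfl one_pos).tendsto.comp hsq
    rw [artanh_zero] at hpdw
    exact tendsto_nhds_unique (hs w hw) hpdw
  · intro h
    exact ⟨0, mem_ball_self one_pos, h 0 (mem_ball_self one_pos)⟩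
end
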